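/- KKT characterization: for the problem of maximizing Σᵢ f_i(Pᵢ) subject to Σᵢ Pᵢ ≤ P and Pᵢ ≥ 0, where f_i(P) = (1/2)·log(1 + P/σ_{Mi}²) − (1/2)·log(1 + P/σ_{Wi}²) with σ_{Wi}² > σ_{Mi}² > 0, a feasible point (P₁,…,P_N) with Σᵢ Pᵢ = P is optimal if there exists λ > 0 such that for each i: f_i′(Pᵢ) = λ if Pᵢ > 0, and f_i′(0) ≤ λ if Pᵢ = 0. -/

import Mathlib

open Real

noncomputable def fC (a b x : ℝ) : ℝ :=
  (1/2) * Real.log (1 + x / a) - (1/2) * Real.log (1 + x / b)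

noncomputable def dC (a b x : ℝ) : ℝ :=
  (1/2) * (1/(a+x)) - (1/2) * (1/(b+x))

lemma hd (a b : ℝ) (ha : 0 < a) (hb : 0 < b) {x : ℝ} (hx : 0 ≤ x) :
    HasDerivAt (fun x : ℝ => (1/2) * Real.log (1 + x / a) - (1/2) * Real.log (1 + x / b))
      (dC a b x) x := by
  have hax : 0 < 1 + x / a := by positivity
  have hbx : 0 < 1 + x / b := by positivity
  have h1 : HasDerivAt (fun x : ℝ => 1 + x / a) (1/a) x := by
    simpa using ((hasDerivAt_id x).div_const a).const_add 1
  have h2 : HasDerivAt (fun x : ℝ => 1 + x / b) (1/b) x := by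
    simpa using ((hasDerivAt_id x).div_const b).const_add 1
  have l1 : HasDerivAt (fun x : ℝ => Real.log (1 + x / a)) ((1/a) / (1 + x / a)) x :=
    h1.log hax.ne'
  have l2 : HasDerivAt (fun x : ℝ => Real.log (1 + x / b)) ((1/b) / (1 + x / b)) x :=
    h2.log hbx.ne'
  have := (l1.const_mul (1/2 : ℝ)).sub (l2.const_mul (1/2 : ℝ))
  refine this.congr_deriv ?_
  have hax' : a + x ≠ 0 := by positivity
  have hbx' : b + x ≠ 0 := by positivity
  unfold dC
  field_simp

lemma dC_anti (a b : ℝ) (ha : 0 < a) (hab : a < b) {x y : ℝ} (hx : 0 ≤ x) (hxy : x ≤ y) :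
    dC a b y ≤ dC a b x := by
  have hb : 0 < b := ha.trans hab
  have key : ∀ z : ℝ, 0 ≤ z → dC a b z = (b - a) / (2 * ((a+z)*(b+z))) := by
    intro z hz
    have h1 : a + z ≠ 0 := by positivity
    have h2 : b + z ≠ 0 := by positivity
    unfold dC; field_simp; ring
  rw [key x hx, key y (hx.trans hxy)]
  have hba : 0 ≤ b - a := by linarith
  gcongr <;> nlinarith

lemma tangent (a b : ℝ) (ha : 0 < a) (hab : a < b) {p q : ℝ} (hp : 0 ≤ p) (hq : 0 ≤ q) :
    fC a b q ≤ fC a b p + dC a b p * (q - p) := by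
  have hb : 0 < b := ha.trans hab
  rcases lt_trichotomy p q with h | h | h
  · obtain ⟨c, hc, hceq⟩ := exists_hasDerivAt_eq_slope (fC a b) (dC a b) h
      (fun x hx => ((hd a b ha hb (hp.trans hx.1)).continuousAt).continuousWithinAt)
      (fun x hx => hd a b ha hb (hp.trans hx.1.le))
    have hdc : dC a b c ≤ dC a b p := dC_anti a b ha hab hp hc.1.le
    have : fC a b q - fC a b p = dC a b c * (q - p) := by
      rw [hceq, div_mul_cancel₀ _ (sub_ne_zero.mpr h.ne')]
    nlinarith [hdc, sub_pos.mpr h]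
  · simp [h]
  · obtain ⟨c, hc, hceq⟩ := exists_hasDerivAt_eq_slope (fC a b) (dC a b) h
      (fun x hx => ((hd a b ha hb (hq.trans hx.1)).continuousAt).continuousWithinAt)
      (fun x hx => hd a b ha hb (hq.trans hx.1.le))
    have hdc : dC a b p ≤ dC a b c := dC_anti a b ha hab (hq.trans hc.1.le) hc.2.le
    have : fC a b p - fC a b q = dC a b c * (p - q) := by
      rw [hceq, div_mul_cancel₀ _ (sub_ne_zero.mpr h.ne')]
    nlinarith [hdc, sub_pos.mpr h]


theorem kkt_sufficiency (N : ℕ) (σM σW : Fin N → ℝ)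
    (hM : ∀ i, 0 < σM i) (hMW : ∀ i, σM i < σW i) (Ptot : ℝ) (hPtot : 0 < Ptot)
    (P : Fin N → ℝ) (hP : ∀ i, 0 ≤ P i) (hsum : ∑ i, P i = Ptot)
    (lam : ℝ) (hlam : 0 < lam)
    (hkkt : ∀ i : Fin N,
      (0 < P i →
        deriv (fun x : ℝ => (1/2) * Real.log (1 + x / σM i)
          - (1/2) * Real.log (1 + x / σW i)) (P i) = lam) ∧
      (P i = 0 →
        deriv (fun x : ℝ => (1/2) * Real.log (1 + x / σM i)
          - (1/2) * Real.log (1 + x / σW i)) 0 ≤ lam)) :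
    ∀ Q : Fin N → ℝ, (∀ i, 0 ≤ Q i) → ∑ i, Q i ≤ Ptot →
      ∑ i, ((1/2) * Real.log (1 + Q i / σM i) - (1/2) * Real.log (1 + Q i / σW i)) ≤
      ∑ i, ((1/2) * Real.log (1 + P i / σM i) - (1/2) * Real.log (1 + P i / σW i)) := by
  intro Q hQ hQsum
  have hderiv : ∀ (i : Fin N) (x : ℝ), 0 ≤ x →
      deriv (fun x : ℝ => (1/2) * Real.log (1 + x / σM i)
        - (1/2) * Real.log (1 + x / σW i)) x = dC (σM i) (σW i) x :=
    fun i x hx => (hd (σM i) (σW i) (hM i) ((hM i).trans (hMW i)) hx).deriv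
  have key : ∀ i : Fin N,
      fC (σM i) (σW i) (Q i) ≤ fC (σM i) (σW i) (P i) + lam * (Q i - P i) := by
    intro i
    have htan := tangent (σM i) (σW i) (hM i) (hMW i) (hP i) (hQ i)
    rcases (hP i).eq_or_lt with h0 | hpos
    · have hle : dC (σM i) (σW i) 0 ≤ lam := by
        rw [← hderiv i 0 le_rfl]; exact (hkkt i).2 h0.symm
      rw [← h0] at htan
      have : dC (σM i) (σW i) 0 * (Q i - 0) ≤ lam * (Q i - 0) := by
        apply mul_le_mul_of_nonneg_right hle; simpa using hQ i
      rw [← h0]; linarith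
    · have heq : dC (σM i) (σW i) (P i) = lam := by
        rw [← hderiv i (P i) (hP i)]; exact (hkkt i).1 hpos
      rw [heq] at htan; exact htan
  calc ∑ i, fC (σM i) (σW i) (Q i)
      ≤ ∑ i, (fC (σM i) (σW i) (P i) + lam * (Q i - P i)) :=
        Finset.sum_le_sum fun i _ => key i
    _ = ∑ i, fC (σM i) (σW i) (P i) + lam * (∑ i, Q i - ∑ i, P i) := by
        rw [Finset.sum_add_distrib, ← Finset.mul_sum, Finset.sum_sub_distrib]
    _ ≤ ∑ i, fC (σM i) (σW i) (P i) := by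
        have : ∑ i, Q i - ∑ i, P i ≤ 0 := by rw [hsum]; linarith
        nlinarith
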